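/- Convexity of the n-th root of the trace of the n-th power on positive semidefinite matrices (Lemma: 1 − (C_n)^{1/n} is a PSEM). Let d be a finite nonempty type and n : ℕ with 1 ≤ n. For all positive semidefinite A, B ∈ Matrix d d ℂ and all t ∈ [0,1], ((((t • A + (1 − t) • B) ^ n).trace).re) ^ (1/(n:ℝ)) ≤ t * (((A ^ n).trace).re) ^ (1/(n:ℝ)) + (1 − t) * (((B ^ n).trace).re) ^ (1/(n:ℝ)), where x ^ (1/(n:ℝ)) denotes the real power Real.rpow. -/

import Mathlib

open Matrix ComplexOrder


private lemma conj_pow_aux {d : Type*} [Fintype d] [DecidableEq d]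
    (U D : Matrix d d ℂ) (hU : U * star U = 1) (hU' : star U * U = 1) (k : ℕ) :
    (U * D * star U) ^ k = U * D ^ k * star U := by
  induction k with
  | zero => simpa using hU.symm
  | succ k ih =>
      rw [pow_succ, ih, pow_succ]
      simp only [Matrix.mul_assoc]
      rw [show star U * (U * (D * star U)) = D * star U by
        rw [← Matrix.mul_assoc, hU', Matrix.one_mul]]

private lemma trace_pow_re {d : Type*} [Fintype d] [DecidableEq d]
    {M : Matrix d d ℂ} (hM : M.IsHermitian) (k : ℕ) :
    ((M ^ k).trace).re = ∑ i, hM.eigenvalues i ^ k := by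
  have hU : (hM.eigenvectorUnitary : Matrix d d ℂ) * star (hM.eigenvectorUnitary : Matrix d d ℂ) = 1 :=
    (Matrix.mem_unitaryGroup_iff).mp (hM.eigenvectorUnitary).2
  have hU' : star (hM.eigenvectorUnitary : Matrix d d ℂ) * (hM.eigenvectorUnitary : Matrix d d ℂ) = 1 :=
    (Matrix.mem_unitaryGroup_iff').mp (hM.eigenvectorUnitary).2
  conv_lhs => rw [hM.spectral_theorem, Unitary.conjStarAlgAut_apply]
  rw [conj_pow_aux _ _ hU hU' k, Matrix.trace_mul_cycle, hU',
    Matrix.one_mul, Matrix.diagonal_pow, Matrix.trace_diagonal]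
  simp [Function.comp, ← Complex.ofReal_pow]

private lemma trace_diag_conj {d : Type*} [Fintype d] [DecidableEq d]
    (W : Matrix d d ℂ) (v w : d → ℝ) :
    ((Matrix.diagonal (Complex.ofReal ∘ v) *
        (W * Matrix.diagonal (Complex.ofReal ∘ w) * star W)).trace).re
      = ∑ i, ∑ j, v i * w j * Complex.normSq (W i j) := by
  rw [Matrix.trace, Complex.re_sum]
  refine Finset.sum_congr rfl fun i _ => ?_
  rw [Matrix.diag_apply, Matrix.diagonal_mul]
  have h1 : (W * Matrix.diagonal (Complex.ofReal ∘ w) * star W) i i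
      = ∑ j, (w j : ℂ) * ((Complex.normSq (W i j) : ℝ) : ℂ) := by
    rw [Matrix.mul_apply]
    refine Finset.sum_congr rfl fun j _ => ?_
    rw [Matrix.mul_diagonal, Matrix.star_apply, Function.comp_apply]
    rw [show W i j * ((w j : ℝ) : ℂ) * star (W i j) = ((w j : ℝ) : ℂ) * (W i j * star (W i j)) by
      ring, Complex.star_def, Complex.mul_conj]
  rw [h1, Finset.mul_sum, Complex.re_sum]
  refine Finset.sum_congr rfl fun j _ => ?_
  rw [Function.comp_apply, ← Complex.ofReal_mul, ← Complex.ofReal_mul, Complex.ofReal_re]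
  ring

private lemma psd_smul {d : Type*} [Fintype d] [DecidableEq d]
    {A : Matrix d d ℂ} (hA : A.PosSemidef) {t : ℝ} (ht : 0 ≤ t) : (t • A).PosSemidef := by
  have h : t • A = (t : ℂ) • A := by
    ext i j; simp [Complex.real_smul]
  rw [h]
  refine ⟨?_, fun x => ?_⟩
  · show ((t : ℂ) • A)ᴴ = _
    rw [Matrix.conjTranspose_smul, Complex.star_def, Complex.conj_ofReal, hA.1.eq]
  · exact (hA.smul (show (0 : ℂ) ≤ (t : ℂ) by exact_mod_cast ht)).2 x

private lemma trace_mul_pow_le {d : Type*} [Fintype d] [DecidableEq d]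
    {n : ℕ} (hn : 2 ≤ n) {A C : Matrix d d ℂ} (hA : A.PosSemidef) (hC : C.PosSemidef) :
    ((A * C ^ (n - 1)).trace).re
      ≤ (((A ^ n).trace).re) ^ (1 / (n : ℝ)) * (((C ^ n).trace).re) ^ (1 - 1 / (n : ℝ)) := by
  classical
  set U := (hA.1.eigenvectorUnitary : Matrix d d ℂ) with hUdef
  set V := (hC.1.eigenvectorUnitary : Matrix d d ℂ) with hVdef
  have hUU : U * star U = 1 := (Matrix.mem_unitaryGroup_iff).mp (hA.1.eigenvectorUnitary).2
  have hUU' : star U * U = 1 := (Matrix.mem_unitaryGroup_iff').mp (hA.1.eigenvectorUnitary).2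
  have hVV : V * star V = 1 := (Matrix.mem_unitaryGroup_iff).mp (hC.1.eigenvectorUnitary).2
  have hVV' : star V * V = 1 := (Matrix.mem_unitaryGroup_iff').mp (hC.1.eigenvectorUnitary).2
  set W := star U * V with hWdef
  have hWW : W * star W = 1 := by
    rw [hWdef, StarMul.star_mul, star_star, Matrix.mul_assoc, ← Matrix.mul_assoc V, hVV,
      Matrix.one_mul, hUU']
  have hWW' : star W * W = 1 := by
    rw [hWdef, StarMul.star_mul, star_star, Matrix.mul_assoc, ← Matrix.mul_assoc U, hUU,
      Matrix.one_mul, hVV']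
  set a := hA.1.eigenvalues with hadef
  set c := hC.1.eigenvalues with hcdef
  have ha : ∀ i, 0 ≤ a i := hA.eigenvalues_nonneg
  have hc : ∀ j, 0 ≤ c j := hC.eigenvalues_nonneg
  set p : d → d → ℝ := fun i j => Complex.normSq (W i j) with hpdef
  have hp : ∀ i j, 0 ≤ p i j := fun i j => Complex.normSq_nonneg _
  have hrow : ∀ i, ∑ j, p i j = 1 := by
    intro i
    have h1 := congrFun (congrFun hWW i) i
    simp only [Matrix.mul_apply, Matrix.star_apply, Matrix.one_apply_eq, Complex.star_def,
      Complex.mul_conj] at h1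
    have h2 : ((∑ j, p i j : ℝ) : ℂ) = 1 := by push_cast; exact h1
    exact_mod_cast h2
  have hcol : ∀ j, ∑ i, p i j = 1 := by
    intro j
    have h1 := congrFun (congrFun hWW' j) j
    simp only [Matrix.mul_apply, Matrix.star_apply, Matrix.one_apply_eq, Complex.star_def] at h1
    have h1' : ∑ x, ((p x j : ℝ) : ℂ) = 1 := by
      rw [← h1]
      exact Finset.sum_congr rfl fun x _ => ((mul_comm _ _).trans (Complex.mul_conj _)).symm
    have h2 : ((∑ i, p i j : ℝ) : ℂ) = 1 := by push_cast at h1' ⊢; exact h1'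
    exact_mod_cast h2
  -- the trace as a double sum
  have hCpow : C ^ (n - 1)
      = V * Matrix.diagonal (Complex.ofReal ∘ fun j => c j ^ (n - 1)) * star V := by
    conv_lhs => rw [hC.1.spectral_theorem, Unitary.conjStarAlgAut_apply]
    rw [conj_pow_aux _ _ hVV hVV', Matrix.diagonal_pow]
    have hfun : ((RCLike.ofReal ∘ c : d → ℂ) ^ (n - 1))
        = (Complex.ofReal ∘ fun j => c j ^ (n - 1)) := by
      funext j
      simp [Pi.pow_apply, Function.comp_apply, ← Complex.ofReal_pow]
    rw [hfun]
  have hre : U * (Matrix.diagonal (Complex.ofReal ∘ a) *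
        (W * Matrix.diagonal (Complex.ofReal ∘ fun j => c j ^ (n - 1)) * star W)) * star U
      = A * C ^ (n - 1) := by
    conv_rhs => rw [hA.1.spectral_theorem, Unitary.conjStarAlgAut_apply, hCpow]
    rw [hWdef, StarMul.star_mul, star_star]
    simp only [Matrix.mul_assoc]
    rw [hUU, Matrix.mul_one]
    rfl
  have htr : ((A * C ^ (n - 1)).trace).re = ∑ i, ∑ j, a i * c j ^ (n - 1) * p i j := by
    rw [← hre, Matrix.trace_mul_cycle, hUU', Matrix.one_mul]
    exact trace_diag_conj W a fun j => c j ^ (n - 1)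
  -- eigenvalue sums
  have htrA : ((A ^ n).trace).re = ∑ i, a i ^ n := trace_pow_re hA.1 n
  have htrC : ((C ^ n).trace).re = ∑ j, c j ^ n := trace_pow_re hC.1 n
  have hn1 : (1 : ℝ) < (n : ℝ) := by exact_mod_cast hn.trans_lt' one_lt_two
  have hnne : (n : ℝ) ≠ 0 := by positivity
  set q : ℝ := Real.conjExponent (n : ℝ) with hqdef
  have hpq : ((n : ℝ)).HolderConjugate q := Real.HolderConjugate.conjExponent hn1
  have key := Real.inner_le_Lp_mul_Lq_of_nonneg (s := (Finset.univ : Finset (d × d)))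
      (f := fun z => (p z.1 z.2) ^ (1 / (n : ℝ)) * a z.1)
      (g := fun z => (p z.1 z.2) ^ (1 - 1 / (n : ℝ)) * c z.2 ^ (n - 1))
      hpq (fun z _ => mul_nonneg (Real.rpow_nonneg (hp _ _) _) (ha _))
      (fun z _ => mul_nonneg (Real.rpow_nonneg (hp _ _) _) (pow_nonneg (hc _) _))
  have hsum1 : ∑ z : d × d, ((p z.1 z.2) ^ (1 / (n : ℝ)) * a z.1) *
      ((p z.1 z.2) ^ (1 - 1 / (n : ℝ)) * c z.2 ^ (n - 1))
      = ∑ i, ∑ j, a i * c j ^ (n - 1) * p i j := by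
    rw [Fintype.sum_prod_type]
    refine Finset.sum_congr rfl fun i _ => Finset.sum_congr rfl fun j _ => ?_
    have hppq : (p i j) ^ (1 / (n : ℝ)) * (p i j) ^ (1 - 1 / (n : ℝ)) = p i j := by
      rw [← Real.rpow_add' (hp i j) (by norm_num),
        show (1 / (n : ℝ) + (1 - 1 / (n : ℝ))) = 1 by ring, Real.rpow_one]
    calc (p i j) ^ (1 / (n : ℝ)) * a i * ((p i j) ^ (1 - 1 / (n : ℝ)) * c j ^ (n - 1))
        = ((p i j) ^ (1 / (n : ℝ)) * (p i j) ^ (1 - 1 / (n : ℝ))) * (a i * c j ^ (n - 1)) := by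
          ring
      _ = a i * c j ^ (n - 1) * p i j := by rw [hppq]; ring
  have hsum2 : ∑ z : d × d, ((p z.1 z.2) ^ (1 / (n : ℝ)) * a z.1) ^ (n : ℝ)
      = ∑ i, a i ^ n := by
    rw [Fintype.sum_prod_type]
    refine Finset.sum_congr rfl fun i _ => ?_
    have hterm : ∀ j, ((p i j) ^ (1 / (n : ℝ)) * a i) ^ (n : ℝ) = p i j * a i ^ n := by
      intro j
      rw [Real.mul_rpow (Real.rpow_nonneg (hp i j) _) (ha i), ← Real.rpow_natCast (a i) n,
        ← Real.rpow_mul (hp i j), one_div, inv_mul_cancel₀ hnne, Real.rpow_one,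
        Real.rpow_natCast]
    simp only [hterm]
    rw [← Finset.sum_mul, hrow i, one_mul]
  have hsum3 : ∑ z : d × d, ((p z.1 z.2) ^ (1 - 1 / (n : ℝ)) * c z.2 ^ (n - 1)) ^ q
      = ∑ j, c j ^ n := by
    rw [Fintype.sum_prod_type_right]
    refine Finset.sum_congr rfl fun j _ => ?_
    have hterm : ∀ i, ((p i j) ^ (1 - 1 / (n : ℝ)) * c j ^ (n - 1)) ^ q = p i j * c j ^ n := by
      intro i
      rw [Real.mul_rpow (Real.rpow_nonneg (hp i j) _) (pow_nonneg (hc j) _)]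
      congr 1
      · rw [← Real.rpow_mul (hp i j), one_div, hpq.one_sub_inv,
          inv_mul_cancel₀ hpq.symm.pos.ne', Real.rpow_one]
      · rw [← Real.rpow_natCast (c j) (n - 1), ← Real.rpow_mul (hc j),
          Nat.cast_sub (by omega), Nat.cast_one, hpq.sub_one_mul_conj, Real.rpow_natCast]
    simp only [hterm]
    rw [← Finset.sum_mul, hcol j, one_mul]
  have h1q : 1 / q = 1 - 1 / (n : ℝ) := by
    rw [one_div, ← hpq.one_sub_inv, one_div]
  rw [hsum1, hsum2, hsum3, h1q] at key
  rw [htr, htrA, htrC]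
  exact key


/-- **Convexity of `ρ ↦ (Tr ρⁿ)^{1/n}` on positive semidefinite matrices**
(Lemma: `1 − (C_n)^{1/n}` is a PSEM): for PSD `A`, `B`, `n ≥ 1`, `t ∈ [0,1]`,
`(Re tr ((t•A+(1-t)•B)^n))^{1/n} ≤ t (Re tr A^n)^{1/n} + (1-t) (Re tr B^n)^{1/n}`,
where `x ^ (1/(n:ℝ))` is `Real.rpow`. -/
theorem trace_pow_rpow_convex {d : Type*} [Fintype d] [DecidableEq d] [Nonempty d]
    (n : ℕ) (hn : 1 ≤ n)
    (A B : Matrix d d ℂ) (hA : A.PosSemidef) (hB : B.PosSemidef)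
    (t : ℝ) (ht0 : 0 ≤ t) (ht1 : t ≤ 1) :
    ((((t • A + (1 - t) • B) ^ n).trace).re) ^ (1 / (n : ℝ)) ≤
      t * (((A ^ n).trace).re) ^ (1 / (n : ℝ))
        + (1 - t) * (((B ^ n).trace).re) ^ (1 / (n : ℝ)) := by
  have hs0 : (0 : ℝ) ≤ 1 - t := by linarith
  set C := t • A + (1 - t) • B with hCdef
  have hC : C.PosSemidef := (psd_smul hA ht0).add (psd_smul hB hs0)
  have hAn : 0 ≤ ((A ^ n).trace).re := by
    rw [trace_pow_re hA.1]
    exact Finset.sum_nonneg fun i _ => pow_nonneg (hA.eigenvalues_nonneg i) n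
  have hBn : 0 ≤ ((B ^ n).trace).re := by
    rw [trace_pow_re hB.1]
    exact Finset.sum_nonneg fun i _ => pow_nonneg (hB.eigenvalues_nonneg i) n
  have hCn : 0 ≤ ((C ^ n).trace).re := by
    rw [trace_pow_re hC.1]
    exact Finset.sum_nonneg fun i _ => pow_nonneg (hC.eigenvalues_nonneg i) n
  have hKnn : 0 ≤ t * (((A ^ n).trace).re) ^ (1 / (n : ℝ))
      + (1 - t) * (((B ^ n).trace).re) ^ (1 / (n : ℝ)) :=
    add_nonneg (mul_nonneg ht0 (Real.rpow_nonneg hAn _))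
      (mul_nonneg hs0 (Real.rpow_nonneg hBn _))
  rcases eq_or_lt_of_le hCn with h0 | hpos
  · rw [← h0, Real.zero_rpow (by positivity)]
    exact hKnn
  rcases Nat.lt_or_ge n 2 with h1 | h2
  · -- n = 1
    have hn1 : n = 1 := by omega
    subst hn1
    simp only [pow_one, Nat.cast_one, div_one, Real.rpow_one]
    have hsmul : ∀ (s : ℝ) (M : Matrix d d ℂ), ((s • M).trace).re = s * (M.trace).re := by
      intro s M
      rw [Matrix.trace_smul]
      rw [show s • M.trace = (s : ℂ) * M.trace from Complex.real_smul ..]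
      simp [Complex.mul_re]
    rw [hCdef, Matrix.trace_add, Complex.add_re, hsmul, hsmul]
  · -- n ≥ 2
    have hnne : (n : ℝ) ≠ 0 := by positivity
    have hnm1 : n - 1 + 1 = n := by omega
    have hsplit : ((C ^ n).trace).re
        = t * ((A * C ^ (n - 1)).trace).re + (1 - t) * ((B * C ^ (n - 1)).trace).re := by
      have hCpow : C ^ n = C * C ^ (n - 1) := by
        conv_lhs => rw [← hnm1]
        rw [pow_succ']
      rw [hCpow, hCdef]
      rw [Matrix.add_mul, Matrix.smul_mul, Matrix.smul_mul, Matrix.trace_add, Complex.add_re,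
        Matrix.trace_smul, Matrix.trace_smul]
      rw [show t • (A * C ^ (n - 1)).trace = (t : ℂ) * (A * C ^ (n - 1)).trace from
        Complex.real_smul ..]
      rw [show (1 - t) • (B * C ^ (n - 1)).trace = ((1 - t : ℝ) : ℂ) * (B * C ^ (n - 1)).trace from
        Complex.real_smul ..]
      simp [Complex.mul_re]
      rfl
    have hHA := trace_mul_pow_le h2 hA hC
    have hHB := trace_mul_pow_le h2 hB hC
    have hTle : ((C ^ n).trace).re
        ≤ (t * (((A ^ n).trace).re) ^ (1 / (n : ℝ))
            + (1 - t) * (((B ^ n).trace).re) ^ (1 / (n : ℝ)))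
          * (((C ^ n).trace).re) ^ (1 - 1 / (n : ℝ)) := by
      calc ((C ^ n).trace).re
          = t * ((A * C ^ (n - 1)).trace).re + (1 - t) * ((B * C ^ (n - 1)).trace).re := hsplit
        _ ≤ t * ((((A ^ n).trace).re) ^ (1 / (n : ℝ)) * (((C ^ n).trace).re) ^ (1 - 1 / (n : ℝ)))
            + (1 - t) * ((((B ^ n).trace).re) ^ (1 / (n : ℝ))
              * (((C ^ n).trace).re) ^ (1 - 1 / (n : ℝ))) :=
            add_le_add (mul_le_mul_of_nonneg_left hHA ht0) (mul_le_mul_of_nonneg_left hHB hs0)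
        _ = _ := by ring
    have hTpow : (((C ^ n).trace).re) ^ (1 / (n : ℝ)) * (((C ^ n).trace).re) ^ (1 - 1 / (n : ℝ))
        = ((C ^ n).trace).re := by
      rw [← Real.rpow_add hpos, show 1 / (n : ℝ) + (1 - 1 / (n : ℝ)) = 1 by ring, Real.rpow_one]
    have hpow2 : 0 < (((C ^ n).trace).re) ^ (1 - 1 / (n : ℝ)) := Real.rpow_pos_of_pos hpos _
    have heq : (((C ^ n).trace).re) ^ (1 / (n : ℝ))
        = ((C ^ n).trace).re / (((C ^ n).trace).re) ^ (1 - 1 / (n : ℝ)) := by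
      rw [eq_div_iff hpow2.ne', hTpow]
    rw [heq]
    exact (div_le_iff₀ hpow2).mpr hTle
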